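/- (Bound on the regularized least-squares parameter.) Let λ > 0, let φ_1, …, φ_{k−1} ∈ ℝ^d, and let y_1, …, y_{k−1} ∈ ℝ with |y_i| ≤ B for all i. Set Σ := λ·I + Σ_{i=1}^{k−1} φ_i φ_iᵀ. Then ‖Σ⁻¹ Σ_{i=1}^{k−1} φ_i y_i‖ ≤ B·√(k·d/λ). -/

import Mathlib

open Matrix Finset

lemma vmv_mulVec {d : ℕ} (w v x : Fin d → ℝ) :
    Matrix.vecMulVec w v *ᵥ x = (v ⬝ᵥ x) • w := by
  ext j
  simp [Matrix.vecMulVec, Matrix.mulVec, dotProduct, Finset.mul_sum, mul_comm,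
    mul_left_comm, mul_assoc]

lemma sum_mulVec' {d n : ℕ} (M : Fin n → Matrix (Fin d) (Fin d) ℝ) (x : Fin d → ℝ) :
    (∑ i, M i) *ᵥ x = ∑ i, (M i *ᵥ x) := by
  ext j
  simp [Matrix.mulVec, dotProduct, Finset.sum_mul, Matrix.sum_apply, Finset.sum_apply]
  rw [Finset.sum_comm]

lemma dot_sum' {d n : ℕ} (v : Fin d → ℝ) (w : Fin n → Fin d → ℝ) :
    v ⬝ᵥ (∑ i, w i) = ∑ i, v ⬝ᵥ w i := by
  simp [dotProduct, Finset.mul_sum, Finset.sum_apply]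
  rw [Finset.sum_comm]

set_option maxHeartbeats 1000000 in
/-- Bound on the regularized least-squares parameter.
For `Σ = λ I + ∑_{i=1}^{k-1} φ_i φ_iᵀ` with `λ > 0` and responses `|y_i| ≤ B`,
`‖Σ⁻¹ ∑_{i=1}^{k-1} y_i φ_i‖ ≤ B √(k d / λ)` (Euclidean norm). -/
theorem ridge_parameter_bound
    (d k : ℕ) (lam : ℝ) (hlam : 0 < lam)
    (φ : Fin (k - 1) → (Fin d → ℝ)) (y : Fin (k - 1) → ℝ)
    (B : ℝ) (hB : 0 ≤ B) (hy : ∀ i, |y i| ≤ B)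
    (Sig : Matrix (Fin d) (Fin d) ℝ)
    (hSig : Sig = lam • (1 : Matrix (Fin d) (Fin d) ℝ) +
      ∑ i, Matrix.vecMulVec (φ i) (φ i)) :
    Real.sqrt ((Sig⁻¹ *ᵥ ∑ i, y i • φ i) ⬝ᵥ (Sig⁻¹ *ᵥ ∑ i, y i • φ i)) ≤
      B * Real.sqrt ((k : ℝ) * d / lam) := by
  rcases Nat.eq_zero_or_pos d with hd | hd
  · subst hd
    have : ((Sig⁻¹ *ᵥ ∑ i, y i • φ i) ⬝ᵥ (Sig⁻¹ *ᵥ ∑ i, y i • φ i)) = 0 := by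
      simp [dotProduct]
    rw [this, Real.sqrt_zero]
    positivity
  have hmul : ∀ v : Fin d → ℝ, Sig *ᵥ v = lam • v + ∑ i, (φ i ⬝ᵥ v) • φ i := by
    intro v
    rw [hSig, Matrix.add_mulVec, Matrix.smul_mulVec, Matrix.one_mulVec, sum_mulVec']
    congr 1
    exact Finset.sum_congr rfl fun i _ => vmv_mulVec _ _ _
  have hquad : ∀ v : Fin d → ℝ, v ⬝ᵥ (Sig *ᵥ v) = lam * (v ⬝ᵥ v) + ∑ i, (φ i ⬝ᵥ v) ^ 2 := by
    intro v
    rw [hmul, dotProduct_add, dotProduct_smul, dot_sum']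
    simp only [smul_eq_mul]
    congr 1
    refine Finset.sum_congr rfl fun i _ => ?_
    rw [dotProduct_smul, smul_eq_mul, dotProduct_comm]
    ring
  -- positive definiteness
  have hpd : Sig.PosDef := by
    refine Matrix.posDef_iff_dotProduct_mulVec.mpr ⟨?_, ?_⟩
    · rw [hSig]
      ext i j
      simp [Matrix.conjTranspose_apply, Matrix.one_apply, Matrix.vecMulVec_apply,
        Matrix.sum_apply, Matrix.add_apply, Matrix.smul_apply, mul_comm, eq_comm]
    · intro v hv
      have hvv : 0 < v ⬝ᵥ v := by
        rcases lt_or_eq_of_le (dotProduct_self_star_nonneg v) with h | h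
        · simpa using h
        · exact absurd (dotProduct_self_eq_zero.mp (by simpa using h.symm)) hv
      have hst : (star v : Fin d → ℝ) = v := by simp
      rw [hst, hquad]
      have h2 : (0:ℝ) ≤ ∑ i, (φ i ⬝ᵥ v) ^ 2 := Finset.sum_nonneg fun i _ => sq_nonneg _
      nlinarith
  set b : Fin d → ℝ := ∑ i, y i • φ i with hb
  set θ : Fin d → ℝ := Sig⁻¹ *ᵥ b with hθ
  have hinv : Sig *ᵥ θ = b := by
    rw [hθ, Matrix.mulVec_mulVec, Matrix.mul_nonsing_inv _
      ((Matrix.isUnit_iff_isUnit_det _).mp hpd.isUnit), Matrix.one_mulVec]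
  set s : ℝ := θ ⬝ᵥ θ with hs
  set t : ℝ := ∑ i, (φ i ⬝ᵥ θ) ^ 2 with ht
  have hsnn : 0 ≤ s := by
    rw [hs]
    exact Finset.sum_nonneg fun i _ => mul_self_nonneg _
  have htnn : 0 ≤ t := Finset.sum_nonneg fun i _ => sq_nonneg _
  have hq : θ ⬝ᵥ b = lam * s + t := by rw [← hinv, hquad]
  have hqb : θ ⬝ᵥ b = ∑ i, y i * (φ i ⬝ᵥ θ) := by
    rw [hb, dot_sum']
    refine Finset.sum_congr rfl fun i _ => ?_
    rw [dotProduct_smul, smul_eq_mul, dotProduct_comm]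
  have hcs : (∑ i, y i * (φ i ⬝ᵥ θ)) ^ 2 ≤ (((k - 1 : ℕ) : ℝ) * B ^ 2) * t := by
    calc (∑ i, y i * (φ i ⬝ᵥ θ)) ^ 2 ≤ (∑ i, (y i) ^ 2) * t :=
          Finset.sum_mul_sq_le_sq_mul_sq _ _ _
      _ ≤ (((k - 1 : ℕ) : ℝ) * B ^ 2) * t := by
          apply mul_le_mul_of_nonneg_right _ htnn
          calc (∑ i, (y i) ^ 2) ≤ ∑ _i : Fin (k - 1), B ^ 2 := by
                refine Finset.sum_le_sum fun i _ => ?_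
                nlinarith [hy i, abs_nonneg (y i), sq_abs (y i)]
            _ = ((k - 1 : ℕ) : ℝ) * B ^ 2 := by
                simp [Finset.sum_const, Finset.card_univ, nsmul_eq_mul]
  set N : ℝ := ((k - 1 : ℕ) : ℝ) with hN
  have hNnn : (0:ℝ) ≤ N := Nat.cast_nonneg _
  have hqnn : 0 ≤ lam * s + t := by positivity
  have hkey : lam * s + t ≤ N * B ^ 2 := by
    have h1 : (lam * s + t) ^ 2 ≤ (N * B ^ 2) * (lam * s + t) := by
      calc (lam * s + t) ^ 2 = (∑ i, y i * (φ i ⬝ᵥ θ)) ^ 2 := by rw [← hqb, hq]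
        _ ≤ (N * B ^ 2) * t := hcs
        _ ≤ (N * B ^ 2) * (lam * s + t) := by
            apply mul_le_mul_of_nonneg_left _ (by positivity)
            nlinarith
    rcases eq_or_lt_of_le hqnn with h | h
    · rw [← h]; positivity
    · nlinarith
  have hslam : s ≤ B ^ 2 * ((k : ℝ) * d / lam) := by
    have h1 : N ≤ (k : ℝ) * d := by
      have h2 : (N : ℝ) ≤ (k : ℝ) := by
        rw [hN]; exact_mod_cast Nat.sub_le k 1
      have hd1 : (1 : ℝ) ≤ (d : ℝ) := by exact_mod_cast hd
      nlinarith [Nat.cast_nonneg (α := ℝ) k, h2.trans_lt (lt_of_le_of_lt le_rfl (lt_add_one _))]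
    have h3 : lam * s ≤ B ^ 2 * ((k : ℝ) * d) := by nlinarith
    rw [show B ^ 2 * ((k:ℝ) * d / lam) = B ^ 2 * ((k:ℝ) * d) / lam by ring,
      le_div_iff₀ hlam]
    nlinarith
  calc Real.sqrt s ≤ Real.sqrt (B ^ 2 * ((k:ℝ) * d / lam)) := Real.sqrt_le_sqrt hslam
    _ = B * Real.sqrt ((k:ℝ) * d / lam) := by
        rw [Real.sqrt_mul (sq_nonneg B), Real.sqrt_sq hB]
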